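/- Let Q(λ) be a symmetric n×n matrix family, continuously differentiable with Q'(λ) ≥ 0 on [a,b]. Then rank Q(λ) is piecewise constant on [a,b], the left limit rank Q(λ⁻) exists for each λ ∈ (a,b], and Σ_{a<λ≤b} (rank Q(λ⁻) − rank Q(λ)) = ind Q(a) − ind Q(b), where ind denotes the number of negative eigenvalues. -/

import Mathlib

open Matrix
noncomputable section

/-- The standard symplectic matrix `J = [[0, I], [-I, 0]]`. -/
def Jmat (k : Type*) [Fintype k] [DecidableEq k] : Matrix (k ⊕ k) (k ⊕ k) ℝ :=
  fromBlocks 0 1 (-1) 0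

/-- A matrix `S` is symplectic if `Sᵀ J S = J`. -/
def IsSymplectic {k : Type*} [Fintype k] [DecidableEq k]
    (S : Matrix (k ⊕ k) (k ⊕ k) ℝ) : Prop :=
  Sᵀ * Jmat k * S = Jmat k

/-- `S'` is the (entrywise) derivative family of the matrix family `S`. -/
def HasMatDeriv {k m : Type*} (S S' : ℝ → Matrix k m ℝ) : Prop :=
  ∀ (l : ℝ) (i : k) (j : m), HasDerivAt (fun t => S t i j) (S' l i j) l

/-- `Ψ(S(λ)) = Jᵀ S'(λ) S(λ)⁻¹`, where `S'` is a derivative family of `S`. -/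
def Psi {k : Type*} [Fintype k] [DecidableEq k]
    (S S' : ℝ → Matrix (k ⊕ k) (k ⊕ k) ℝ) (l : ℝ) : Matrix (k ⊕ k) (k ⊕ k) ℝ :=
  (Jmat k)ᵀ * S' l * (S l)⁻¹

open Classical in
/-- The Moore–Penrose pseudoinverse, defined via the four Penrose conditions. -/
def pinv {m k : Type*} [Fintype m] [Fintype k] (A : Matrix m k ℝ) : Matrix k m ℝ :=
  if h : ∃ B : Matrix k m ℝ,
      A * B * A = A ∧ B * A * B = B ∧ (A * B)ᵀ = A * B ∧ (B * A)ᵀ = B * A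
  then h.choose else 0

/-- `ind A`: the number of negative eigenvalues (with multiplicity) of a symmetric matrix. -/
def negInd {k : Type*} [Fintype k] [DecidableEq k] (A : Matrix k k ℝ) : ℕ :=
  if h : A.IsHermitian then Fintype.card {i // h.eigenvalues i < 0} else 0

/-- The Wronskian `w(Y, Ŷ) = Yᵀ J Ŷ`. -/
def wron {k m : Type*} [Fintype k] [Fintype m] [DecidableEq k]
    (Y Yh : Matrix (k ⊕ k) m ℝ) : Matrix m m ℝ :=
  Yᵀ * Jmat k * Yh

/-- The matrix `M = (I − X X†) X̂` from the definition of the comparative index. -/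
def compM {k m : Type*} [Fintype k] [Fintype m] [DecidableEq k]
    (Y Yh : Matrix (k ⊕ k) m ℝ) : Matrix k m ℝ :=
  let X := Y.submatrix Sum.inl id
  let Xh := Yh.submatrix Sum.inl id
  Xh - X * pinv X * Xh

/-- The matrix `D = T w(Y,Ŷ)ᵀ X† X̂ T` (with `T = I − M† M`) from the comparative index. -/
def compD {k m : Type*} [Fintype k] [Fintype m] [DecidableEq k] [DecidableEq m]
    (Y Yh : Matrix (k ⊕ k) m ℝ) : Matrix m m ℝ :=
  let X := Y.submatrix Sum.inl id
  let Xh := Yh.submatrix Sum.inl id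
  let T : Matrix m m ℝ := 1 - pinv (compM Y Yh) * compM Y Yh
  T * (wron Y Yh)ᵀ * pinv X * Xh * T

/-- The comparative index `μ(Y, Ŷ) = rank M + ind D`. -/
def compIdx {k m : Type*} [Fintype k] [Fintype m] [DecidableEq k] [DecidableEq m]
    (Y Yh : Matrix (k ⊕ k) m ℝ) : ℕ :=
  (compM Y Yh).rank + negInd (compD Y Yh)

/-- The dual comparative index `μ*(Y, Ŷ) = rank M + ind (−D)`. -/
def dualCompIdx {k m : Type*} [Fintype k] [Fintype m] [DecidableEq k] [DecidableEq m]
    (Y Yh : Matrix (k ⊕ k) m ℝ) : ℕ :=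
  (compM Y Yh).rank + negInd (-(compD Y Yh))

/-- A `2n×n` matrix `Y = (X; U)` is a conjoined basis: `rank Y = n` and `Xᵀ U` symmetric. -/
def IsConjoinedBasis {k m : Type*} [Fintype k] [Fintype m] [DecidableEq k]
    (Y : Matrix (k ⊕ k) m ℝ) : Prop :=
  Y.rank = Fintype.card m ∧ ((Y.submatrix Sum.inl id)ᵀ * Y.submatrix Sum.inr id).IsSymm

open Classical in
/-- The left-hand limit value of an `ℕ`-valued function at `x`
(defaulting to `f x` if the left limit does not exist). -/
def leftVal (f : ℝ → ℕ) (x : ℝ) : ℕ :=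
  if h : ∃ r, ∀ᶠ t in nhdsWithin x (Set.Iio x), f t = r then h.choose else f x

/-- The jump `f(x⁻) − f(x)` at `x`, as an integer. -/
def jmp (f : ℝ → ℕ) (x : ℝ) : ℤ := (leftVal f x : ℤ) - (f x : ℤ)

namespace St12
open RealInnerProductSpace

variable {n : ℕ}

def qf (A : Matrix (Fin n) (Fin n) ℝ) (x : Fin n → ℝ) : ℝ := x ⬝ᵥ A *ᵥ x

lemma inner_eq_dot (x y : EuclideanSpace ℝ (Fin n)) :
    ⟪x, y⟫ = (x : Fin n → ℝ) ⬝ᵥ (y : Fin n → ℝ) := by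
  simp [PiLp.inner_apply, dotProduct, mul_comm]

lemma herm_of_symm {A : Matrix (Fin n) (Fin n) ℝ} (h : A.IsSymm) : A.IsHermitian := by
  rwa [Matrix.IsHermitian, conjTranspose_eq_transpose_of_trivial]

lemma transpose_eq {A : Matrix (Fin n) (Fin n) ℝ} (h : A.IsHermitian) : Aᵀ = A := by
  rw [← conjTranspose_eq_transpose_of_trivial]; exact h

lemma qf_eq_sum {A : Matrix (Fin n) (Fin n) ℝ} (hA : A.IsHermitian)
    (x : EuclideanSpace ℝ (Fin n)) :
    qf A x = ∑ i, hA.eigenvalues i * (hA.eigenvectorBasis.repr x i)^2 := by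
  set v := hA.eigenvectorBasis with hv
  have hy : ∃ y : EuclideanSpace ℝ (Fin n), (y : Fin n → ℝ) = A *ᵥ (x : Fin n → ℝ) := ⟨WithLp.toLp 2 (A *ᵥ (x : Fin n → ℝ)), rfl⟩
  obtain ⟨y, hyd⟩ := hy
  have h1 : qf A x = ⟪x, y⟫ := by rw [inner_eq_dot, hyd, qf]
  have h2 : ∀ i, v.repr y i = hA.eigenvalues i * v.repr x i := by
    intro i
    have h3 : (v i : Fin n → ℝ) ᵥ* A = A *ᵥ (v i : Fin n → ℝ) := by
      conv_lhs => rw [← transpose_eq hA]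
      rw [vecMul_transpose]
    have h4 : A *ᵥ (v i : Fin n → ℝ) = hA.eigenvalues i • (v i : Fin n → ℝ) :=
      hA.mulVec_eigenvectorBasis i
    rw [v.repr_apply_apply, v.repr_apply_apply, inner_eq_dot, inner_eq_dot, hyd,
      dotProduct_mulVec, h3, h4, smul_dotProduct]
    rfl
  rw [h1, ← v.repr.inner_map_map x y]
  simp only [PiLp.inner_apply, RCLike.inner_apply, conj_trivial]
  refine Finset.sum_congr rfl fun i _ => ?_
  rw [h2 i]; ring

lemma normsq_eq_sum {A : Matrix (Fin n) (Fin n) ℝ} (hA : A.IsHermitian)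
    (x : EuclideanSpace ℝ (Fin n)) :
    ∑ j, (x j)^2 = ∑ i, (hA.eigenvectorBasis.repr x i)^2 := by
  have := hA.eigenvectorBasis.repr.inner_map_map x x
  simp only [PiLp.inner_apply, RCLike.inner_apply, conj_trivial] at this
  simp only [pow_two]
  exact this.symm


section spanlemmas
variable {A : Matrix (Fin n) (Fin n) ℝ} (hA : A.IsHermitian)

lemma repr_span_zero (s : Finset (Fin n)) (x : EuclideanSpace ℝ (Fin n))
    (hx : x ∈ Submodule.span ℝ (⇑hA.eigenvectorBasis '' (s : Set (Fin n))))
    {j : Fin n} (hj : j ∉ s) : hA.eigenvectorBasis.repr x j = 0 := by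
  set v := hA.eigenvectorBasis with hv
  induction hx using Submodule.span_induction with
  | mem y hy =>
    obtain ⟨i, his, rfl⟩ := hy
    rw [v.repr_apply_apply]
    exact v.orthonormal.2 (fun h => hj (h ▸ his))
  | zero => simp
  | add y z _ _ hy hz => simp [map_add, hy, hz]
  | smul c y _ hy => simp [_root_.map_smul, hy]

lemma finrank_span_eigs (s : Finset (Fin n)) :
    Module.finrank ℝ (Submodule.span ℝ (⇑hA.eigenvectorBasis '' (s : Set (Fin n)))) = s.card := by
  classical
  set v := hA.eigenvectorBasis with hv
  have hinj : Function.Injective ⇑v := v.orthonormal.linearIndependent.injective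
  have h1 : (⇑v '' (s : Set (Fin n))) = ((s.image ⇑v : Finset (EuclideanSpace ℝ (Fin n))) : Set _) := by
    simp [Finset.coe_image]
  rw [h1, finrank_span_finset_eq_card, Finset.card_image_of_injective _ hinj]
  exact ((linearIndepOn_id_range_iff hinj).mpr v.orthonormal.linearIndependent).mono (by intro x hx; rcases Finset.mem_image.1 hx with ⟨i, _, rfl⟩; exact ⟨i, rfl⟩)

end spanlemmas

def posInd (A : Matrix (Fin n) (Fin n) ℝ) : ℕ :=
  if h : A.IsHermitian then Fintype.card {i // 0 < h.eigenvalues i} else 0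

section cors
variable {A B : Matrix (Fin n) (Fin n) ℝ}

open Classical in
lemma negInd_eq (hA : A.IsHermitian) :
    negInd A = (Finset.univ.filter fun i => hA.eigenvalues i < 0).card := by
  rw [negInd, dif_pos hA]; exact Fintype.card_subtype _

open Classical in
lemma posInd_eq (hA : A.IsHermitian) :
    posInd A = (Finset.univ.filter fun i => 0 < hA.eigenvalues i).card := by
  rw [posInd, dif_pos hA]; exact Fintype.card_subtype _

lemma negInd_le (hA : A.IsHermitian) : negInd A ≤ n := by
  rw [negInd_eq hA]
  exact le_trans (Finset.card_filter_le _ _) (by simp)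

lemma posInd_le (hA : A.IsHermitian) : posInd A ≤ n := by
  rw [posInd_eq hA]
  exact le_trans (Finset.card_filter_le _ _) (by simp)

lemma engine (hA : A.IsHermitian) (s : Finset (Fin n)) :
    ∃ W : Submodule ℝ (EuclideanSpace ℝ (Fin n)), Module.finrank ℝ W = s.card ∧
    ∀ x ∈ W, ∃ c : Fin n → ℝ, (∀ i ∉ s, c i = 0) ∧
      qf A x = ∑ i, hA.eigenvalues i * (c i)^2 ∧ ∑ j, ((x : Fin n → ℝ) j)^2 = ∑ i, (c i)^2 :=
  ⟨Submodule.span ℝ (⇑hA.eigenvectorBasis '' (s : Set (Fin n))), finrank_span_eigs hA s,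
    fun x hx => ⟨hA.eigenvectorBasis.repr x, fun _ hi => repr_span_zero hA s x hx hi,
      qf_eq_sum hA x, normsq_eq_sum hA x⟩⟩

open Classical in
lemma neg_subspace (hA : A.IsHermitian) :
    ∃ W : Submodule ℝ (EuclideanSpace ℝ (Fin n)), Module.finrank ℝ W = negInd A ∧
    ∃ ε > 0, ∀ x ∈ W, qf A x ≤ -ε * ∑ j, ((x : Fin n → ℝ) j)^2 := by
  set s := Finset.univ.filter fun i => hA.eigenvalues i < 0 with hs
  obtain ⟨W, hW1, hW2⟩ := engine hA s
  refine ⟨W, by rw [hW1, negInd_eq hA], ?_⟩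
  rcases s.eq_empty_or_nonempty with he | hne
  · refine ⟨1, one_pos, fun x hx => ?_⟩
    obtain ⟨c, hc0, hq, hn⟩ := hW2 x hx
    have hcz : ∀ i, c i = 0 := fun i => hc0 i (by simp [he])
    simp only [hq, hn, hcz]
    simp
  · set ε := (s.image fun i => -hA.eigenvalues i).min' (hne.image _) with hε
    have hεmem := (s.image fun i => -hA.eigenvalues i).min'_mem (hne.image _)
    rw [Finset.mem_image] at hεmem
    obtain ⟨i0, hi0s, hi0⟩ := hεmem
    have hεpos : 0 < ε := by
      rw [hε]
      refine (Finset.lt_min'_iff _ _).2 fun y hy => ?_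
      rw [Finset.mem_image] at hy
      obtain ⟨i, hi, rfl⟩ := hy
      have : hA.eigenvalues i < 0 := (Finset.mem_filter.1 hi).2
      linarith
    refine ⟨ε, hεpos, fun x hx => ?_⟩
    obtain ⟨c, hc0, hq, hn⟩ := hW2 x hx
    rw [hq, hn]
    have hterm : ∀ i, hA.eigenvalues i * (c i)^2 ≤ -ε * (c i)^2 := by
      intro i
      by_cases hi : i ∈ s
      · have h1 : ε ≤ -hA.eigenvalues i :=
          Finset.min'_le _ _ (Finset.mem_image_of_mem _ hi)
        nlinarith [sq_nonneg (c i)]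
      · simp [hc0 i hi]
    calc ∑ i, hA.eigenvalues i * (c i)^2 ≤ ∑ i, -ε * (c i)^2 :=
          Finset.sum_le_sum fun i _ => hterm i
      _ = -ε * ∑ i, (c i)^2 := by rw [Finset.mul_sum]
open Classical in
lemma pos_subspace (hA : A.IsHermitian) :
    ∃ W : Submodule ℝ (EuclideanSpace ℝ (Fin n)), Module.finrank ℝ W = posInd A ∧
    ∃ ε > 0, ∀ x ∈ W, ε * ∑ j, ((x : Fin n → ℝ) j)^2 ≤ qf A x := by
  set s := Finset.univ.filter fun i => 0 < hA.eigenvalues i with hs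
  obtain ⟨W, hW1, hW2⟩ := engine hA s
  refine ⟨W, by rw [hW1, posInd_eq hA], ?_⟩
  rcases s.eq_empty_or_nonempty with he | hne
  · refine ⟨1, one_pos, fun x hx => ?_⟩
    obtain ⟨c, hc0, hq, hn⟩ := hW2 x hx
    have hcz : ∀ i, c i = 0 := fun i => hc0 i (by simp [he])
    simp only [hq, hn, hcz]
    simp
  · set ε := (s.image fun i => hA.eigenvalues i).min' (hne.image _) with hε
    have hεpos : 0 < ε := by
      rw [hε]
      refine (Finset.lt_min'_iff _ _).2 fun y hy => ?_
      rw [Finset.mem_image] at hy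
      obtain ⟨i, hi, rfl⟩ := hy
      exact (Finset.mem_filter.1 hi).2
    refine ⟨ε, hεpos, fun x hx => ?_⟩
    obtain ⟨c, hc0, hq, hn⟩ := hW2 x hx
    rw [hq, hn]
    have hterm : ∀ i, ε * (c i)^2 ≤ hA.eigenvalues i * (c i)^2 := by
      intro i
      by_cases hi : i ∈ s
      · have h1 : ε ≤ hA.eigenvalues i :=
          Finset.min'_le _ _ (Finset.mem_image_of_mem _ hi)
        nlinarith [sq_nonneg (c i)]
      · simp [hc0 i hi]
    calc ε * ∑ i, (c i)^2 = ∑ i, ε * (c i)^2 := by rw [Finset.mul_sum]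
      _ ≤ ∑ i, hA.eigenvalues i * (c i)^2 := Finset.sum_le_sum fun i _ => hterm i

open Classical in
lemma nonneg_subspace (hA : A.IsHermitian) :
    ∃ W : Submodule ℝ (EuclideanSpace ℝ (Fin n)), Module.finrank ℝ W = n - negInd A ∧
    ∀ x ∈ W, 0 ≤ qf A x := by
  set s := Finset.univ.filter fun i => ¬ hA.eigenvalues i < 0 with hs
  obtain ⟨W, hW1, hW2⟩ := engine hA s
  have hcard : s.card = n - negInd A := by
    have := Finset.card_filter_add_card_filter_not
      (s := (Finset.univ : Finset (Fin n))) (p := fun i => hA.eigenvalues i < 0)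
    rw [negInd_eq hA]
    simp only [Finset.card_univ, Fintype.card_fin] at this
    have hs' : s.card = (Finset.univ.filter fun i => ¬ hA.eigenvalues i < 0).card := by rw [hs]
    omega
  refine ⟨W, by rw [hW1, hcard], fun x hx => ?_⟩
  obtain ⟨c, hc0, hq, hn⟩ := hW2 x hx
  rw [hq]
  refine Finset.sum_nonneg fun i _ => ?_
  by_cases hi : i ∈ s
  · have : ¬ hA.eigenvalues i < 0 := (Finset.mem_filter.1 hi).2
    nlinarith [sq_nonneg (c i)]
  · simp [hc0 i hi]

open Classical in
lemma nonpos_subspace (hA : A.IsHermitian) :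
    ∃ W : Submodule ℝ (EuclideanSpace ℝ (Fin n)), Module.finrank ℝ W = n - posInd A ∧
    ∀ x ∈ W, qf A x ≤ 0 := by
  set s := Finset.univ.filter fun i => ¬ 0 < hA.eigenvalues i with hs
  obtain ⟨W, hW1, hW2⟩ := engine hA s
  have hcard : s.card = n - posInd A := by
    have := Finset.card_filter_add_card_filter_not
      (s := (Finset.univ : Finset (Fin n))) (p := fun i => 0 < hA.eigenvalues i)
    rw [posInd_eq hA]
    simp only [Finset.card_univ, Fintype.card_fin] at this
    have hs' : s.card = (Finset.univ.filter fun i => ¬ 0 < hA.eigenvalues i).card := by rw [hs]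
    omega
  refine ⟨W, by rw [hW1, hcard], fun x hx => ?_⟩
  obtain ⟨c, hc0, hq, hn⟩ := hW2 x hx
  rw [hq]
  refine Finset.sum_nonpos fun i _ => ?_
  by_cases hi : i ∈ s
  · have : ¬ 0 < hA.eigenvalues i := (Finset.mem_filter.1 hi).2
    nlinarith [sq_nonneg (c i)]
  · simp [hc0 i hi]

lemma sumsq_pos {x : EuclideanSpace ℝ (Fin n)} (hx : x ≠ 0) :
    0 < ∑ j, ((x : Fin n → ℝ) j)^2 := by
  have h1 : ∃ j, (x : Fin n → ℝ) j ≠ 0 := by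
    by_contra h
    push_neg at h
    exact hx (by ext j; exact h j)
  obtain ⟨j, hj⟩ := h1
  have : (0:ℝ) < (x j)^2 := by positivity
  exact lt_of_lt_of_le this (Finset.single_le_sum (f := fun j => ((x : Fin n → ℝ) j)^2) (fun i _ => sq_nonneg _) (Finset.mem_univ j))

lemma dim_add_le (W1 W2 : Submodule ℝ (EuclideanSpace ℝ (Fin n)))
    (h1 : ∀ x ∈ W1, x ≠ 0 → qf A x < 0) (h2 : ∀ x ∈ W2, 0 ≤ qf A x) :
    Module.finrank ℝ W1 + Module.finrank ℝ W2 ≤ n := by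
  have hdisj : W1 ⊓ W2 = ⊥ := by
    rw [Submodule.eq_bot_iff]
    intro x hx
    by_contra hx0
    exact absurd (h2 x hx.2) (not_le.2 (h1 x hx.1 hx0))
  have := Submodule.finrank_sup_add_finrank_inf_eq W1 W2
  rw [hdisj] at this
  simp only [finrank_bot, add_zero] at this
  rw [← this]
  have hle := Submodule.finrank_le (W1 ⊔ W2)
  simpa [finrank_euclideanSpace] using hle

lemma numax (hA : A.IsHermitian) (W : Submodule ℝ (EuclideanSpace ℝ (Fin n)))
    (hW : ∀ x ∈ W, x ≠ 0 → qf A x < 0) : Module.finrank ℝ W ≤ negInd A := by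
  obtain ⟨W2, hW2c, hW2⟩ := nonneg_subspace hA
  have := dim_add_le W W2 hW hW2
  have h2 := negInd_le hA
  omega

lemma pimax (hA : A.IsHermitian) (W : Submodule ℝ (EuclideanSpace ℝ (Fin n)))
    (hW : ∀ x ∈ W, x ≠ 0 → 0 < qf A x) : Module.finrank ℝ W ≤ posInd A := by
  obtain ⟨W2, hW2c, hW2⟩ := nonpos_subspace hA
  have key : Module.finrank ℝ W + Module.finrank ℝ W2 ≤ n := by
    have hdisj : W ⊓ W2 = ⊥ := by
      rw [Submodule.eq_bot_iff]
      intro x hx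
      by_contra hx0
      exact absurd (hW2 x hx.2) (not_le.2 (hW x hx.1 hx0))
    have := Submodule.finrank_sup_add_finrank_inf_eq W W2
    rw [hdisj] at this
    simp only [finrank_bot, add_zero] at this
    rw [← this]
    simpa [finrank_euclideanSpace] using Submodule.finrank_le (W ⊔ W2)
  have h2 := posInd_le hA
  omega

lemma nu_mono (hA : A.IsHermitian) (hB : B.IsHermitian)
    (h : ∀ x : EuclideanSpace ℝ (Fin n), qf A x ≤ qf B x) : negInd B ≤ negInd A := by
  obtain ⟨W, hWc, ε, hε, hW⟩ := neg_subspace hB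
  rw [← hWc]
  refine numax hA W fun x hx hx0 => lt_of_le_of_lt (h x) ?_
  have := hW x hx
  nlinarith [sumsq_pos hx0]

lemma pi_mono (hA : A.IsHermitian) (hB : B.IsHermitian)
    (h : ∀ x : EuclideanSpace ℝ (Fin n), qf A x ≤ qf B x) : posInd A ≤ posInd B := by
  obtain ⟨W, hWc, ε, hε, hW⟩ := pos_subspace hA
  rw [← hWc]
  refine pimax hB W fun x hx hx0 => lt_of_lt_of_le ?_ (h x)
  have := hW x hx
  nlinarith [sumsq_pos hx0]

lemma nu_lsc (hA : A.IsHermitian) :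
    ∃ ε > 0, ∀ B : Matrix (Fin n) (Fin n) ℝ, B.IsHermitian →
      (∀ x : EuclideanSpace ℝ (Fin n), |qf B x - qf A x| ≤ ε * ∑ j, ((x : Fin n → ℝ) j)^2) →
      negInd A ≤ negInd B := by
  obtain ⟨W, hWc, ε, hε, hW⟩ := neg_subspace hA
  refine ⟨ε/2, by linarith, fun B hB hclose => ?_⟩
  rw [← hWc]
  refine numax hB W fun x hx hx0 => ?_
  have h1 := hW x hx
  have h2 := hclose x
  have h3 := sumsq_pos hx0
  have h4 := abs_le.1 h2
  nlinarith

lemma pi_lsc (hA : A.IsHermitian) :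
    ∃ ε > 0, ∀ B : Matrix (Fin n) (Fin n) ℝ, B.IsHermitian →
      (∀ x : EuclideanSpace ℝ (Fin n), |qf B x - qf A x| ≤ ε * ∑ j, ((x : Fin n → ℝ) j)^2) →
      posInd A ≤ posInd B := by
  obtain ⟨W, hWc, ε, hε, hW⟩ := pos_subspace hA
  refine ⟨ε/2, by linarith, fun B hB hclose => ?_⟩
  rw [← hWc]
  refine pimax hB W fun x hx hx0 => ?_
  have h1 := hW x hx
  have h2 := hclose x
  have h3 := sumsq_pos hx0
  have h4 := abs_le.1 h2
  nlinarith

open Classical in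
lemma rank_eq_negInd_add_posInd (hA : A.IsHermitian) : A.rank = negInd A + posInd A := by
  rw [hA.rank_eq_card_non_zero_eigs, negInd_eq hA, posInd_eq hA, Fintype.card_subtype]
  rw [← Finset.card_union_of_disjoint]
  · congr 1
    ext i
    simp only [Finset.mem_filter, Finset.mem_union, Finset.mem_univ, true_and]
    constructor
    · intro h
      rcases lt_or_gt_of_ne h with h | h
      · exact Or.inl h
      · exact Or.inr h
    · rintro (h | h) <;> intro hc <;> rw [hc] at h <;> exact lt_irrefl 0 h
  · rw [Finset.disjoint_filter]
    intro i _ h1 h2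
    exact absurd (h1.trans h2) (lt_irrefl _)

end cors

section analytic
variable {A B D : Matrix (Fin n) (Fin n) ℝ}

lemma qf_sub (x : Fin n → ℝ) : qf B x - qf A x = qf (B - A) x := by
  simp [qf, Matrix.sub_mulVec, dotProduct_sub]

lemma qf_abs_le (D : Matrix (Fin n) (Fin n) ℝ) (x : Fin n → ℝ) :
    |qf D x| ≤ (∑ i, ∑ j, |D i j|) * ∑ j, (x j)^2 := by
  have hM : ∀ i j, |x i| * |x j| ≤ ∑ k, (x k)^2 := by
    intro i j
    have hi : (x i)^2 ≤ ∑ k, (x k)^2 :=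
      Finset.single_le_sum (f := fun k => (x k)^2) (fun k _ => sq_nonneg _) (Finset.mem_univ i)
    have hj : (x j)^2 ≤ ∑ k, (x k)^2 :=
      Finset.single_le_sum (f := fun k => (x k)^2) (fun k _ => sq_nonneg _) (Finset.mem_univ j)
    nlinarith [sq_abs (x i), sq_abs (x j), abs_nonneg (x i), abs_nonneg (x j),
      sq_nonneg (|x i| - |x j|)]
  have h1 : qf D x = ∑ i, ∑ j, x i * D i j * x j := by
    simp [qf, dotProduct, mulVec, Finset.mul_sum, mul_assoc]
  rw [h1, Finset.sum_mul]
  refine le_trans (Finset.abs_sum_le_sum_abs _ _) (Finset.sum_le_sum fun i _ => ?_)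
  rw [Finset.sum_mul]
  refine le_trans (Finset.abs_sum_le_sum_abs _ _) (Finset.sum_le_sum fun j _ => ?_)
  rw [abs_mul, abs_mul]
  calc |x i| * |D i j| * |x j| = |D i j| * (|x i| * |x j|) := by ring
    _ ≤ |D i j| * ∑ k, (x k)^2 := by
        exact mul_le_mul_of_nonneg_left (hM i j) (abs_nonneg _)

lemma qf_hasDeriv {a b : ℝ} {Q Q' : ℝ → Matrix (Fin n) (Fin n) ℝ}
    (hd : ∀ l ∈ Set.Icc a b, ∀ i j,
      HasDerivWithinAt (fun t => Q t i j) (Q' l i j) (Set.Icc a b) l)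
    (x : Fin n → ℝ) (l : ℝ) (hl : l ∈ Set.Icc a b) :
    HasDerivWithinAt (fun t => qf (Q t) x) (qf (Q' l) x) (Set.Icc a b) l := by
  have h1 : ∀ t, qf (Q t) x = ∑ i, ∑ j, x i * Q t i j * x j := by
    intro t
    simp [qf, dotProduct, mulVec, Finset.mul_sum, mul_assoc]
  have h2 : qf (Q' l) x = ∑ i, ∑ j, x i * Q' l i j * x j := by
    simp [qf, dotProduct, mulVec, Finset.mul_sum, mul_assoc]
  simp only [h1, h2]
  refine HasDerivWithinAt.fun_sum fun i _ => HasDerivWithinAt.fun_sum fun j _ => ?_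
  have := (hd l hl i j).const_mul (x i)
  have := this.mul_const (x j)
  simpa [mul_assoc] using this

lemma qf_monotoneOn {a b : ℝ} {Q Q' : ℝ → Matrix (Fin n) (Fin n) ℝ}
    (hd : ∀ l ∈ Set.Icc a b, ∀ i j,
      HasDerivWithinAt (fun t => Q t i j) (Q' l i j) (Set.Icc a b) l)
    (hpos : ∀ l ∈ Set.Icc a b, (Q' l).PosSemidef)
    (x : Fin n → ℝ) : MonotoneOn (fun t => qf (Q t) x) (Set.Icc a b) := by
  refine monotoneOn_of_hasDerivWithinAt_nonneg (convex_Icc a b)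
    (fun t ht => (qf_hasDeriv hd x t ht).continuousWithinAt)
    (f' := fun l => qf (Q' l) x)
    (fun t ht => ((qf_hasDeriv hd x t (interior_subset ht)).mono interior_subset)) ?_
  intro t ht
  have h := (posSemidef_iff_dotProduct_mulVec.mp (hpos t (interior_subset ht))).2 x
  simpa [qf] using h

end analytic

lemma leftVal_eq {f : ℝ → ℕ} {x : ℝ} {m : ℕ}
    (h : ∀ᶠ t in nhdsWithin x (Set.Iio x), f t = m) : leftVal f x = m := by
  have hex : ∃ r, ∀ᶠ t in nhdsWithin x (Set.Iio x), f t = r := ⟨m, h⟩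
  rw [leftVal, dif_pos hex]
  obtain ⟨t, ht1, ht2⟩ := (hex.choose_spec.and h).exists
  rw [← ht1, ht2]

lemma finsum_mem_single {s : Set ℝ} {f : ℝ → ℤ} (m : ℝ) (hm : m ∈ s)
    (h : ∀ x ∈ s, x ≠ m → f x = 0) : ∑ᶠ x ∈ s, f x = f m := by
  classical
  have hsub : s ∩ Function.support f ⊆ {m} := by
    rintro x ⟨hxs, hxf⟩
    by_contra hxm
    exact hxf (h x hxs hxm)
  have hfin : (s ∩ Function.support f).Finite := (Set.finite_singleton m).subset hsub
  rw [finsum_mem_eq_sum f hfin]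
  by_cases hms : m ∈ hfin.toFinset
  · rw [Finset.sum_eq_single_of_mem m hms]
    intro x hx hxm
    exact h x (hfin.mem_toFinset.1 hx).1 hxm
  · have hf0 : f m = 0 := by
      by_contra h0
      exact hms (hfin.mem_toFinset.2 ⟨hm, h0⟩)
    rw [hf0]
    refine Finset.sum_eq_zero fun x hx => ?_
    have := hsub (hfin.mem_toFinset.1 hx)
    simp only [Set.mem_singleton_iff] at this
    rw [this] at hx
    exact absurd (hfin.mem_toFinset.1 hx).2 (by rw [Function.mem_support, not_not, hf0])

lemma finsum_mem_zero' {s : Set ℝ} {f : ℝ → ℤ} (h : ∀ x ∈ s, f x = 0) :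
    ∑ᶠ x ∈ s, f x = 0 := by
  rw [finsum_mem_congr rfl h]
  simp

section main
variable {a b : ℝ} {Q Q' : ℝ → Matrix (Fin n) (Fin n) ℝ}

lemma mono2 (hsymm : ∀ l ∈ Set.Icc a b, (Q l).IsSymm)
    (hd : ∀ l ∈ Set.Icc a b, ∀ i j,
      HasDerivWithinAt (fun t => Q t i j) (Q' l i j) (Set.Icc a b) l)
    (hpos : ∀ l ∈ Set.Icc a b, (Q' l).PosSemidef)
    {s t : ℝ} (hs : s ∈ Set.Icc a b) (ht : t ∈ Set.Icc a b) (hst : s ≤ t) :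
    negInd (Q t) ≤ negInd (Q s) ∧ posInd (Q s) ≤ posInd (Q t) := by
  have hqf : ∀ x : EuclideanSpace ℝ (Fin n), qf (Q s) x ≤ qf (Q t) x :=
    fun x => qf_monotoneOn hd hpos x hs ht hst
  exact ⟨nu_mono (herm_of_symm (hsymm s hs)) (herm_of_symm (hsymm t ht)) hqf,
    pi_mono (herm_of_symm (hsymm s hs)) (herm_of_symm (hsymm t ht)) hqf⟩

lemma lsc2 (hsymm : ∀ l ∈ Set.Icc a b, (Q l).IsSymm)
    (hd : ∀ l ∈ Set.Icc a b, ∀ i j,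
      HasDerivWithinAt (fun t => Q t i j) (Q' l i j) (Set.Icc a b) l)
    {l : ℝ} (hl : l ∈ Set.Icc a b) :
    ∃ δ > 0, ∀ t ∈ Set.Icc a b, |t - l| < δ →
      negInd (Q l) ≤ negInd (Q t) ∧ posInd (Q l) ≤ posInd (Q t) := by
  obtain ⟨ε₁, hε₁, h1⟩ := nu_lsc (herm_of_symm (hsymm l hl))
  obtain ⟨ε₂, hε₂, h2⟩ := pi_lsc (herm_of_symm (hsymm l hl))
  set ε := min ε₁ ε₂ with hε
  have hεpos : 0 < ε := lt_min hε₁ hε₂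
  have hg : Filter.Tendsto (fun t => ∑ i, ∑ j, |Q t i j - Q l i j|)
      (nhdsWithin l (Set.Icc a b)) (nhds 0) := by
    have : Filter.Tendsto (fun t => ∑ i, ∑ j, |Q t i j - Q l i j|)
        (nhdsWithin l (Set.Icc a b)) (nhds (∑ i : Fin n, ∑ j : Fin n, |Q l i j - Q l i j|)) := by
      refine tendsto_finset_sum _ fun i _ => tendsto_finset_sum _ fun j _ => ?_
      exact (((hd l hl i j).continuousWithinAt).sub tendsto_const_nhds).abs
    simpa using this
  have hev : ∀ᶠ t in nhdsWithin l (Set.Icc a b), (∑ i, ∑ j, |Q t i j - Q l i j|) < ε :=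
    hg.eventually_lt_const hεpos
  obtain ⟨δ, hδpos, hδ⟩ := Metric.mem_nhdsWithin_iff.1 hev
  refine ⟨δ, hδpos, fun t htab hdist => ?_⟩
  have htmem : t ∈ {t | (∑ i, ∑ j, |Q t i j - Q l i j|) < ε} := by
    refine hδ ⟨?_, htab⟩
    rw [Metric.mem_ball, Real.dist_eq]
    exact hdist
  have hbound : ∀ x : EuclideanSpace ℝ (Fin n),
      |qf (Q t) x - qf (Q l) x| ≤ ε * ∑ j, ((x : Fin n → ℝ) j)^2 := by
    intro x
    rw [qf_sub]
    refine le_trans (qf_abs_le _ _) ?_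
    have hsq : (0:ℝ) ≤ ∑ j, ((x : Fin n → ℝ) j)^2 :=
      Finset.sum_nonneg fun j _ => sq_nonneg _
    exact mul_le_mul_of_nonneg_right (le_of_lt htmem) hsq
  constructor
  · exact h1 (Q t) (herm_of_symm (hsymm t htab)) fun x =>
      le_trans (hbound x) (mul_le_mul_of_nonneg_right (min_le_left _ _)
        (Finset.sum_nonneg fun j _ => sq_nonneg _))
  · exact h2 (Q t) (herm_of_symm (hsymm t htab)) fun x =>
      le_trans (hbound x) (mul_le_mul_of_nonneg_right (min_le_right _ _)
        (Finset.sum_nonneg fun j _ => sq_nonneg _))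

lemma rank_split (hsymm : ∀ l ∈ Set.Icc a b, (Q l).IsSymm) {t : ℝ} (ht : t ∈ Set.Icc a b) :
    (Q t).rank = negInd (Q t) + posInd (Q t) :=
  rank_eq_negInd_add_posInd (herm_of_symm (hsymm t ht))

lemma leftNu (hsymm : ∀ l ∈ Set.Icc a b, (Q l).IsSymm)
    (hd : ∀ l ∈ Set.Icc a b, ∀ i j,
      HasDerivWithinAt (fun t => Q t i j) (Q' l i j) (Set.Icc a b) l)
    (hpos : ∀ l ∈ Set.Icc a b, (Q' l).PosSemidef)
    {l : ℝ} (hl : l ∈ Set.Ioc a b) :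
    ∃ t₀ ∈ Set.Ioo a l, ∀ t ∈ Set.Ioo t₀ l,
      negInd (Q t) = leftVal (fun t => negInd (Q t)) l := by
  set S : Set ℕ := (fun t => negInd (Q t)) '' Set.Ioo a l with hS
  have hne : S.Nonempty := ⟨_, ⟨(a+l)/2, ⟨by linarith [hl.1], by linarith [hl.1]⟩, rfl⟩⟩
  obtain ⟨t₀, ht₀, ht₀v⟩ := Nat.sInf_mem hne
  have hIcc : ∀ t ∈ Set.Ioo a l, t ∈ Set.Icc a b :=
    fun t ht => ⟨le_of_lt ht.1, le_trans (le_of_lt ht.2) hl.2⟩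
  have hconst : ∀ t ∈ Set.Ioo t₀ l, negInd (Q t) = sInf S := by
    intro t ht
    have htm : t ∈ Set.Ioo a l := ⟨lt_trans ht₀.1 ht.1, ht.2⟩
    have h1 : negInd (Q t) ≤ negInd (Q t₀) :=
      (mono2 hsymm hd hpos (hIcc t₀ ht₀) (hIcc t htm) (le_of_lt ht.1)).1
    have h2 : sInf S ≤ negInd (Q t) := Nat.sInf_le ⟨t, htm, rfl⟩
    have h3 : negInd (Q t₀) = sInf S := ht₀v
    omega
  have hev : ∀ᶠ t in nhdsWithin l (Set.Iio l), (fun t => negInd (Q t)) t = sInf S :=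
    Filter.eventually_of_mem (Ioo_mem_nhdsLT_of_mem ⟨ht₀.2, le_refl l⟩) hconst
  have hlv := leftVal_eq hev
  exact ⟨t₀, ht₀, fun t ht => (hconst t ht).trans hlv.symm⟩

lemma leftPi (hsymm : ∀ l ∈ Set.Icc a b, (Q l).IsSymm)
    (hd : ∀ l ∈ Set.Icc a b, ∀ i j,
      HasDerivWithinAt (fun t => Q t i j) (Q' l i j) (Set.Icc a b) l)
    (hpos : ∀ l ∈ Set.Icc a b, (Q' l).PosSemidef)
    {l : ℝ} (hl : l ∈ Set.Ioc a b) :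
    ∃ t₀ ∈ Set.Ico a l, ∀ t ∈ Set.Ioo t₀ l, posInd (Q t) = posInd (Q l) := by
  have hlIcc : l ∈ Set.Icc a b := ⟨le_of_lt hl.1, hl.2⟩
  obtain ⟨δ, hδ, h⟩ := lsc2 hsymm hd hlIcc
  refine ⟨max a (l - δ/2), ⟨le_max_left _ _, max_lt hl.1 (by linarith)⟩, fun t ht => ?_⟩
  have hta : a < t := lt_of_le_of_lt (le_max_left a _) ht.1
  have htIcc : t ∈ Set.Icc a b := ⟨le_of_lt hta, le_trans (le_of_lt ht.2) hl.2⟩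
  have hdist : |t - l| < δ := by
    have h1 : l - δ/2 < t := lt_of_le_of_lt (le_max_right a _) ht.1
    rw [abs_sub_lt_iff]
    constructor <;> [linarith [ht.2]; linarith]
  have h1 := (h t htIcc hdist).2
  have h2 := (mono2 hsymm hd hpos htIcc hlIcc (le_of_lt ht.2)).2
  omega

lemma leftRank (hsymm : ∀ l ∈ Set.Icc a b, (Q l).IsSymm)
    (hd : ∀ l ∈ Set.Icc a b, ∀ i j,
      HasDerivWithinAt (fun t => Q t i j) (Q' l i j) (Set.Icc a b) l)
    (hpos : ∀ l ∈ Set.Icc a b, (Q' l).PosSemidef)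
    {l : ℝ} (hl : l ∈ Set.Ioc a b) :
    ∃ t₀ ∈ Set.Ico a l,
      (∀ t ∈ Set.Ioo t₀ l,
        (Q t).rank = leftVal (fun t => negInd (Q t)) l + posInd (Q l)) ∧
      leftVal (fun t => (Q t).rank) l
        = leftVal (fun t => negInd (Q t)) l + posInd (Q l) := by
  obtain ⟨t₁, ht₁, hc₁⟩ := leftNu hsymm hd hpos hl
  obtain ⟨t₂, ht₂, hc₂⟩ := leftPi hsymm hd hpos hl
  set t₀ := max t₁ t₂ with ht₀def
  have ht₀ : t₀ ∈ Set.Ico a l := ⟨le_trans (le_of_lt ht₁.1) (le_max_left _ _),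
    max_lt ht₁.2 ht₂.2⟩
  have hconst : ∀ t ∈ Set.Ioo t₀ l,
      (Q t).rank = leftVal (fun t => negInd (Q t)) l + posInd (Q l) := by
    intro t ht
    have h1 : t ∈ Set.Ioo t₁ l := ⟨lt_of_le_of_lt (le_max_left _ _) ht.1, ht.2⟩
    have h2 : t ∈ Set.Ioo t₂ l := ⟨lt_of_le_of_lt (le_max_right _ _) ht.1, ht.2⟩
    have htIcc : t ∈ Set.Icc a b :=
      ⟨le_trans ht₀.1 (le_of_lt ht.1), le_trans (le_of_lt ht.2) hl.2⟩
    rw [rank_split hsymm htIcc, hc₁ t h1, hc₂ t h2]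
  have hev : ∀ᶠ t in nhdsWithin l (Set.Iio l),
      (fun t => (Q t).rank) t = leftVal (fun t => negInd (Q t)) l + posInd (Q l) :=
    Filter.eventually_of_mem (Ioo_mem_nhdsLT_of_mem ⟨ht₀.2, le_refl l⟩) hconst
  exact ⟨t₀, ht₀, hconst, leftVal_eq hev⟩

lemma jumpF (hsymm : ∀ l ∈ Set.Icc a b, (Q l).IsSymm)
    (hd : ∀ l ∈ Set.Icc a b, ∀ i j,
      HasDerivWithinAt (fun t => Q t i j) (Q' l i j) (Set.Icc a b) l)
    (hpos : ∀ l ∈ Set.Icc a b, (Q' l).PosSemidef)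
    {l : ℝ} (hl : l ∈ Set.Ioc a b) :
    jmp (fun t => (Q t).rank) l
      = (leftVal (fun t => negInd (Q t)) l : ℤ) - negInd (Q l) := by
  obtain ⟨t₀, ht₀, hconst, hlv⟩ := leftRank hsymm hd hpos hl
  rw [jmp, hlv, rank_split hsymm ⟨le_of_lt hl.1, hl.2⟩]
  push_cast
  ring

lemma nuLeft_ge (hsymm : ∀ l ∈ Set.Icc a b, (Q l).IsSymm)
    (hd : ∀ l ∈ Set.Icc a b, ∀ i j,
      HasDerivWithinAt (fun t => Q t i j) (Q' l i j) (Set.Icc a b) l)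
    (hpos : ∀ l ∈ Set.Icc a b, (Q' l).PosSemidef)
    {l : ℝ} (hl : l ∈ Set.Ioc a b) :
    negInd (Q l) ≤ leftVal (fun t => negInd (Q t)) l := by
  obtain ⟨t₀, ht₀, hc⟩ := leftNu hsymm hd hpos hl
  set t := (t₀ + l)/2 with htdef
  have ht : t ∈ Set.Ioo t₀ l := ⟨by simp only [htdef]; linarith [ht₀.2], by simp only [htdef]; linarith [ht₀.2]⟩
  rw [← hc t ht]
  exact (mono2 hsymm hd hpos
    ⟨le_of_lt (lt_trans ht₀.1 ht.1), le_trans (le_of_lt ht.2) hl.2⟩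
    ⟨le_of_lt hl.1, hl.2⟩ (le_of_lt ht.2)).1

lemma jump_strict (hsymm : ∀ l ∈ Set.Icc a b, (Q l).IsSymm)
    (hd : ∀ l ∈ Set.Icc a b, ∀ i j,
      HasDerivWithinAt (fun t => Q t i j) (Q' l i j) (Set.Icc a b) l)
    (hpos : ∀ l ∈ Set.Icc a b, (Q' l).PosSemidef)
    {x y : ℝ} (hx : x ∈ Set.Ioc a b) (hy : y ∈ Set.Ioc a b) (hxy : x < y)
    (hjy : jmp (fun t => (Q t).rank) y ≠ 0) : negInd (Q y) < negInd (Q x) := by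
  have hge := nuLeft_ge hsymm hd hpos hy
  have hjf := jumpF hsymm hd hpos hy
  have hgt : negInd (Q y) < leftVal (fun t => negInd (Q t)) y := by
    rcases lt_or_eq_of_le hge with h | h
    · exact h
    · exfalso; apply hjy; rw [hjf, ← h]; ring
  obtain ⟨t₀, ht₀, hc⟩ := leftNu hsymm hd hpos hy
  set t := (max t₀ x + y)/2 with htdef
  have hmlt : max t₀ x < y := max_lt ht₀.2 hxy
  have ht : t ∈ Set.Ioo (max t₀ x) y :=
    ⟨by simp only [htdef]; linarith, by simp only [htdef]; linarith⟩
  have htIoo : t ∈ Set.Ioo t₀ y := ⟨lt_of_le_of_lt (le_max_left _ _) ht.1, ht.2⟩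
  have hxt : x < t := lt_of_le_of_lt (le_max_right _ _) ht.1
  have hxIcc : x ∈ Set.Icc a b := ⟨le_of_lt hx.1, hx.2⟩
  have htIcc : t ∈ Set.Icc a b :=
    ⟨le_of_lt (lt_trans hx.1 hxt), le_trans (le_of_lt ht.2) hy.2⟩
  have h1 : negInd (Q t) ≤ negInd (Q x) :=
    (mono2 hsymm hd hpos hxIcc htIcc (le_of_lt hxt)).1
  rw [hc t htIoo] at h1
  omega

lemma jumpset_finite (hsymm : ∀ l ∈ Set.Icc a b, (Q l).IsSymm)
    (hd : ∀ l ∈ Set.Icc a b, ∀ i j,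
      HasDerivWithinAt (fun t => Q t i j) (Q' l i j) (Set.Icc a b) l)
    (hpos : ∀ l ∈ Set.Icc a b, (Q' l).PosSemidef) :
    {x ∈ Set.Ioc a b | jmp (fun t => (Q t).rank) x ≠ 0}.Finite := by
  refine Set.Finite.of_finite_image (f := fun x => negInd (Q x)) ?_ ?_
  · refine (Set.finite_Iic n).subset ?_
    rintro _ ⟨x, hx, rfl⟩
    exact negInd_le (herm_of_symm (hsymm x ⟨le_of_lt hx.1.1, hx.1.2⟩))
  · intro x hx y hy hxy
    have hxy' : negInd (Q x) = negInd (Q y) := hxy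
    by_contra hne
    rcases lt_or_gt_of_ne hne with h | h
    · exact absurd hxy' (ne_of_gt (jump_strict hsymm hd hpos hx.1 hy.1 h hy.2))
    · exact absurd hxy' (ne_of_lt (jump_strict hsymm hd hpos hy.1 hx.1 h hx.2))

lemma const_of_noJump (hsymm : ∀ l ∈ Set.Icc a b, (Q l).IsSymm)
    (hd : ∀ l ∈ Set.Icc a b, ∀ i j,
      HasDerivWithinAt (fun t => Q t i j) (Q' l i j) (Set.Icc a b) l)
    (hpos : ∀ l ∈ Set.Icc a b, (Q' l).PosSemidef)
    {u v : ℝ} (hu : a ≤ u) (huv : u ≤ v) (hv : v ≤ b)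
    (h : ∀ x ∈ Set.Ioc u v, jmp (fun t => (Q t).rank) x = 0) :
    negInd (Q v) = negInd (Q u) := by
  set S := {t ∈ Set.Icc u v | negInd (Q t) = negInd (Q u)} with hSdef
  have huS : u ∈ S := ⟨⟨le_refl u, huv⟩, rfl⟩
  have hSb : ∀ t ∈ S, t ≤ v := fun t ht => ht.1.2
  have hbdd : BddAbove S := ⟨v, hSb⟩
  set c := sSup S with hcdef
  have hcS1 : u ≤ c := le_csSup hbdd huS
  have hcv : c ≤ v := csSup_le ⟨u, huS⟩ hSb
  have hcIcc : c ∈ Set.Icc a b := ⟨le_trans hu hcS1, le_trans hcv hv⟩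
  have hstep1 : ∀ t, u ≤ t → t < c → negInd (Q t) = negInd (Q u) := by
    intro t htu htc
    obtain ⟨s', hsS, hts⟩ := exists_lt_of_lt_csSup ⟨u, huS⟩ htc
    have htIcc : t ∈ Set.Icc a b :=
      ⟨le_trans hu htu, le_trans (le_of_lt (lt_of_lt_of_le hts (hSb s' hsS))) (le_trans hv (le_refl b))⟩
    have hsIcc : s' ∈ Set.Icc a b := ⟨le_trans hu hsS.1.1, le_trans (hSb s' hsS) hv⟩
    have h1 : negInd (Q s') ≤ negInd (Q t) :=
      (mono2 hsymm hd hpos htIcc hsIcc (le_of_lt hts)).1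
    have h2 : negInd (Q t) ≤ negInd (Q u) :=
      (mono2 hsymm hd hpos ⟨hu, le_trans huv hv⟩ htIcc htu).1
    have h3 := hsS.2
    omega
  have hcu : negInd (Q c) = negInd (Q u) := by
    rcases eq_or_lt_of_le hcS1 with he | hlt
    · rw [← he]
    · have hcIoc : c ∈ Set.Ioc a b := ⟨lt_of_le_of_lt hu hlt, hcIcc.2⟩
      have hjc := h c ⟨hlt, hcv⟩
      have hjf := jumpF hsymm hd hpos hcIoc
      have hlv : (leftVal (fun t => negInd (Q t)) c : ℤ) = negInd (Q c) := by omega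
      obtain ⟨t₀, ht₀, hc2⟩ := leftNu hsymm hd hpos hcIoc
      set t := (max t₀ u + c)/2 with htdef
      have hmlt : max t₀ u < c := max_lt ht₀.2 hlt
      have htm : t ∈ Set.Ioo (max t₀ u) c :=
        ⟨by simp only [htdef]; linarith, by simp only [htdef]; linarith⟩
      have htIoo : t ∈ Set.Ioo t₀ c := ⟨lt_of_le_of_lt (le_max_left _ _) htm.1, htm.2⟩
      have h3 : negInd (Q t) = leftVal (fun t => negInd (Q t)) c := hc2 t htIoo
      have h4 : negInd (Q t) = negInd (Q u) :=
        hstep1 t (le_of_lt (lt_of_le_of_lt (le_max_right _ _) htm.1)) htm.2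
      omega
  have hceq : c = v := by
    by_contra hne
    have hcv' : c < v := lt_of_le_of_ne hcv hne
    obtain ⟨δ, hδ, hR⟩ := lsc2 hsymm hd hcIcc
    set t := min (c + δ/2) v with htdef
    have htc : c < t := lt_min (by linarith) hcv'
    have htv : t ≤ v := min_le_right _ _
    have htIcc : t ∈ Set.Icc a b := ⟨le_trans hcIcc.1 (le_of_lt htc), le_trans htv hv⟩
    have hdist : |t - c| < δ := by
      have h1 : t ≤ c + δ/2 := min_le_left _ _
      rw [abs_sub_lt_iff]
      constructor <;> linarith
    have h1 := (hR t htIcc hdist).1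
    have h2 := (mono2 hsymm hd hpos hcIcc htIcc (le_of_lt htc)).1
    have htS : t ∈ S := ⟨⟨le_trans hcS1 (le_of_lt htc), htv⟩, by omega⟩
    exact absurd (le_csSup hbdd htS) (not_le.2 htc)
  rw [← hceq, hcu]

lemma sum_jumps_empty (hsymm : ∀ l ∈ Set.Icc a b, (Q l).IsSymm)
    (hd : ∀ l ∈ Set.Icc a b, ∀ i j,
      HasDerivWithinAt (fun t => Q t i j) (Q' l i j) (Set.Icc a b) l)
    (hpos : ∀ l ∈ Set.Icc a b, (Q' l).PosSemidef)
    {v : ℝ} (hav : a ≤ v) (hvb : v ≤ b)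
    (hJ : ∀ x ∈ Set.Ioc a v, jmp (fun t => (Q t).rank) x = 0) :
    ∑ᶠ x ∈ Set.Ioc a v, jmp (fun t => (Q t).rank) x
      = (negInd (Q a) : ℤ) - negInd (Q v) := by
  rw [finsum_mem_zero' hJ, const_of_noJump hsymm hd hpos (le_refl a) hav hvb hJ, sub_self]

lemma sum_jumps (hsymm : ∀ l ∈ Set.Icc a b, (Q l).IsSymm)
    (hd : ∀ l ∈ Set.Icc a b, ∀ i j,
      HasDerivWithinAt (fun t => Q t i j) (Q' l i j) (Set.Icc a b) l)
    (hpos : ∀ l ∈ Set.Icc a b, (Q' l).PosSemidef) :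
    ∀ k : ℕ, ∀ v : ℝ, a ≤ v → v ≤ b →
      {x ∈ Set.Ioc a v | jmp (fun t => (Q t).rank) x ≠ 0}.ncard ≤ k →
      ∑ᶠ x ∈ Set.Ioc a v, jmp (fun t => (Q t).rank) x
        = (negInd (Q a) : ℤ) - negInd (Q v) := by
  have hglobfin := jumpset_finite hsymm hd hpos
  set f : ℝ → ℤ := fun x => jmp (fun t => (Q t).rank) x with hfdef
  have hsupp : ∀ s : Set ℝ, s ⊆ Set.Ioc a b → (s ∩ Function.support f).Finite := by
    intro s hs
    refine hglobfin.subset ?_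
    rintro x ⟨hxs, hxf⟩
    exact ⟨hs hxs, hxf⟩
  intro k
  induction k with
  | zero =>
    intro v hav hvb hcard
    have hfinJ : {x ∈ Set.Ioc a v | f x ≠ 0}.Finite :=
      hglobfin.subset (fun x hx => ⟨⟨hx.1.1, le_trans hx.1.2 hvb⟩, hx.2⟩)
    have hJe : {x ∈ Set.Ioc a v | f x ≠ 0} = ∅ :=
      (Set.ncard_eq_zero hfinJ).1 (Nat.le_zero.1 hcard)
    refine sum_jumps_empty hsymm hd hpos hav hvb fun x hx => ?_
    by_contra h0
    exact (Set.eq_empty_iff_forall_notMem.1 hJe x) ⟨hx, h0⟩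
  | succ k ih =>
    intro v hav hvb hcard
    have hfinJ : {x ∈ Set.Ioc a v | f x ≠ 0}.Finite :=
      hglobfin.subset (fun x hx => ⟨⟨hx.1.1, le_trans hx.1.2 hvb⟩, hx.2⟩)
    rcases Set.eq_empty_or_nonempty {x ∈ Set.Ioc a v | f x ≠ 0} with hJe | hne
    · refine sum_jumps_empty hsymm hd hpos hav hvb fun x hx => ?_
      by_contra h0
      exact (Set.eq_empty_iff_forall_notMem.1 hJe x) ⟨hx, h0⟩
    · have hneF : hfinJ.toFinset.Nonempty := by
        rwa [Set.Finite.toFinset_nonempty]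
      set m := hfinJ.toFinset.max' hneF with hmdef
      have hmJ : m ∈ {x ∈ Set.Ioc a v | f x ≠ 0} :=
        hfinJ.mem_toFinset.1 (hfinJ.toFinset.max'_mem hneF)
      have hmax : ∀ x ∈ {x ∈ Set.Ioc a v | f x ≠ 0}, x ≤ m :=
        fun x hx => hfinJ.toFinset.le_max' x (hfinJ.mem_toFinset.2 hx)
      have hmIoc : m ∈ Set.Ioc a v := hmJ.1
      have hmIocb : m ∈ Set.Ioc a b := ⟨hmIoc.1, le_trans hmIoc.2 hvb⟩
      obtain ⟨t₀, ht₀, hc⟩ := leftNu hsymm hd hpos hmIocb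
      set t := (t₀ + m)/2 with htdef
      have htm : t ∈ Set.Ioo t₀ m :=
        ⟨by simp only [htdef]; linarith [ht₀.2], by simp only [htdef]; linarith [ht₀.2]⟩
      have hta : a < t := lt_trans ht₀.1 htm.1
      have htb : t ≤ b := le_trans (le_of_lt htm.2) hmIocb.2
      -- (A)
      have hA : ∀ x ∈ Set.Ioc t m, x ≠ m → f x = 0 := by
        intro x hx hxm
        have hxltm : x < m := lt_of_le_of_ne hx.2 hxm
        have hxIoo : x ∈ Set.Ioo t₀ m := ⟨lt_trans htm.1 hx.1, hxltm⟩
        have hxIocb : x ∈ Set.Ioc a b :=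
          ⟨lt_trans hta hx.1, le_trans (le_of_lt hxltm) hmIocb.2⟩
        have h1 : negInd (Q x) = leftVal (fun t => negInd (Q t)) m := hc x hxIoo
        have h2 : leftVal (fun t => negInd (Q t)) x
            = leftVal (fun t => negInd (Q t)) m := by
          refine leftVal_eq (Filter.eventually_of_mem
            (Ioo_mem_nhdsLT_of_mem ⟨hxIoo.1, le_refl x⟩) fun s hs => ?_)
          exact hc s ⟨hs.1, lt_trans hs.2 hxltm⟩
        have h3 := jumpF hsymm hd hpos hxIocb
        simp only [hfdef]
        rw [h3, h2, h1]
        ring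
      -- (B),(C)
      have hB : ∑ᶠ x ∈ Set.Ioc t m, f x = f m :=
        finsum_mem_single m ⟨htm.2, le_refl m⟩ hA
      have hC : f m = (negInd (Q t) : ℤ) - negInd (Q m) := by
        have h1 := jumpF hsymm hd hpos hmIocb
        have h2 : negInd (Q t) = leftVal (fun t => negInd (Q t)) m := hc t htm
        simp only [hfdef]
        rw [h1, h2]
      -- (D),(E)
      have hD : ∀ x ∈ Set.Ioc m v, f x = 0 := by
        intro x hx
        by_contra h0
        have : x ∈ {x ∈ Set.Ioc a v | f x ≠ 0} :=
          ⟨⟨lt_trans hmIoc.1 hx.1, hx.2⟩, h0⟩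
        exact absurd (hmax x this) (not_le.2 hx.1)
      have hE : ∑ᶠ x ∈ Set.Ioc m v, f x = 0 := finsum_mem_zero' hD
      -- (F)
      have hF : negInd (Q v) = negInd (Q m) :=
        const_of_noJump hsymm hd hpos (le_of_lt hmIocb.1) hmIoc.2 hvb hD
      -- (G)
      have hGcard : {x ∈ Set.Ioc a t | f x ≠ 0}.ncard ≤ k := by
        have hfinJt : {x ∈ Set.Ioc a t | f x ≠ 0}.Finite :=
          hglobfin.subset (fun x hx => ⟨⟨hx.1.1, le_trans hx.1.2 htb⟩, hx.2⟩)
        have hmnot : m ∉ {x ∈ Set.Ioc a t | f x ≠ 0} :=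
          fun hmem => absurd hmem.1.2 (not_le.2 htm.2)
        have hsub : insert m {x ∈ Set.Ioc a t | f x ≠ 0} ⊆ {x ∈ Set.Ioc a v | f x ≠ 0} := by
          rintro x (rfl | hx)
          · exact hmJ
          · exact ⟨⟨hx.1.1, le_trans hx.1.2 (le_trans (le_of_lt htm.2) hmIoc.2)⟩, hx.2⟩
        have h1 := Set.ncard_le_ncard hsub hfinJ
        rw [Set.ncard_insert_of_notMem hmnot hfinJt] at h1
        have hcard' : {x ∈ Set.Ioc a v | f x ≠ 0}.ncard ≤ k + 1 := hcard
        omega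
      have hG := ih t (le_of_lt hta) htb hGcard
      -- combine
      have hdisj1 : Disjoint (Set.Ioc a t) (Set.Ioc t v) := Set.Ioc_disjoint_Ioc_of_le le_rfl
      have hdisj2 : Disjoint (Set.Ioc t m) (Set.Ioc m v) := Set.Ioc_disjoint_Ioc_of_le le_rfl
      have hU1 : Set.Ioc a v = Set.Ioc a t ∪ Set.Ioc t v :=
        (Set.Ioc_union_Ioc_eq_Ioc (le_of_lt hta)
          (le_trans (le_of_lt htm.2) hmIoc.2)).symm
      have hU2 : Set.Ioc t v = Set.Ioc t m ∪ Set.Ioc m v :=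
        (Set.Ioc_union_Ioc_eq_Ioc (le_of_lt htm.2) hmIoc.2).symm
      have hIocab : Set.Ioc a v ⊆ Set.Ioc a b := Set.Ioc_subset_Ioc (le_refl a) hvb
      rw [hU1, finsum_mem_union' hdisj1
        (hsupp _ (fun x hx => hIocab (hU1 ▸ Set.mem_union_left _ hx)))
        (hsupp _ (fun x hx => hIocab (hU1 ▸ Set.mem_union_right _ hx))),
        hU2, finsum_mem_union' hdisj2
        (hsupp _ (fun x hx => hIocab (hU1 ▸ Set.mem_union_right _ (hU2 ▸ Set.mem_union_left _ hx))))
        (hsupp _ (fun x hx => hIocab (hU1 ▸ Set.mem_union_right _ (hU2 ▸ Set.mem_union_right _ hx)))),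
        hG, hB, hC, hE, hF]
      ring

end main

end St12

/-- For a C¹ family of symmetric matrices with `Q'(λ) ≥ 0` on `[a,b]`,
the rank is piecewise constant (jumps occur at finitely many points), left limits of the
rank exist, and `Σ_{a<λ≤b} (rank Q(λ⁻) − rank Q(λ)) = ind Q(a) − ind Q(b)`. -/
theorem statement12 (n : ℕ) (a b : ℝ) (hab : a ≤ b)
    (Q Q' : ℝ → Matrix (Fin n) (Fin n) ℝ)
    (hsymm : ∀ l ∈ Set.Icc a b, (Q l).IsSymm)
    (hd : ∀ l ∈ Set.Icc a b, ∀ i j,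
      HasDerivWithinAt (fun t => Q t i j) (Q' l i j) (Set.Icc a b) l)
    (hpos : ∀ l ∈ Set.Icc a b, (Q' l).PosSemidef) :
    (∀ l ∈ Set.Ioc a b, ∃ r, ∀ᶠ t in nhdsWithin l (Set.Iio l), (Q t).rank = r) ∧
    {x ∈ Set.Ioc a b | jmp (fun t => (Q t).rank) x ≠ 0}.Finite ∧
    (∑ᶠ x ∈ Set.Ioc a b, jmp (fun t => (Q t).rank) x)
      = (negInd (Q a) : ℤ) - (negInd (Q b) : ℤ) := by
  refine ⟨?_, St12.jumpset_finite hsymm hd hpos, ?_⟩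
  · intro l hl
    obtain ⟨t₀, ht₀, hconst, _⟩ := St12.leftRank hsymm hd hpos hl
    exact ⟨leftVal (fun t => negInd (Q t)) l + St12.posInd (Q l),
      Filter.eventually_of_mem (Ioo_mem_nhdsLT_of_mem ⟨ht₀.2, le_refl l⟩) hconst⟩
  · exact St12.sum_jumps hsymm hd hpos
      {x ∈ Set.Ioc a b | jmp (fun t => (Q t).rank) x ≠ 0}.ncard b hab (le_refl b) (le_refl _)
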